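/- Let A ∈ {0,1}^{N×N} be any symmetric binary matrix with zero diagonal and K ≥ 1. For the Bernoulli model p(a|θ) = θ^a (1−θ)^{1−a}, define the SBM likelihood p(A|Θ,α) := ∑_{z ∈ {1,…,K}^N} ∏_{i≠j} p(A_{ij}|Θ_{z_i z_j}) ∏_{i=1}^N α_{z_i}, and define srGW_p(A,Θ) := min over T ∈ 𝒰_K(1_N/N) of ∑_{i≠j} ∑_{k,l} (−log p(A_{ij}|Θ_{kl})) T_{ik} T_{jl}. Then sup over Θ ∈ (0,1)^{K×K} of | (1/N²) sup_{α ∈ Δ_K} log p(A|Θ,α) + srGW_p(A,Θ) | ≤ (log K)/N. -/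

import Mathlib

open Finset

/-- `𝒰_K(1_N/N)`: matrices `T ∈ ℝ^{N×K}` with nonnegative entries whose rows sum to `1/N`. -/
def UK (N K : ℕ) : Set (Matrix (Fin N) (Fin K) ℝ) :=
  {T | (∀ i k, 0 ≤ T i k) ∧ ∀ i, ∑ k, T i k = 1 / (N : ℝ)}

/-- Bernoulli model `p(a|θ) = θ^a (1−θ)^{1−a}` (real exponents). -/
noncomputable def pBer (a θ : ℝ) : ℝ := θ ^ a * (1 - θ) ^ (1 - a)

/-- SBM likelihood `p(A|Θ,α) = ∑_z ∏_{i≠j} p(A_{ij}|Θ_{z_i z_j}) ∏_i α_{z_i}`. -/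
noncomputable def SBMlik {N K : ℕ} (A : Matrix (Fin N) (Fin N) ℝ)
    (Θ : Matrix (Fin K) (Fin K) ℝ) (α : Fin K → ℝ) : ℝ :=
  ∑ z : Fin N → Fin K,
    (∏ i, ∏ j, if i = j then 1 else pBer (A i j) (Θ (z i) (z j))) * ∏ i, α (z i)

/-- `srGW_p(A,Θ) = min_{T ∈ 𝒰_K(1_N/N)} ∑_{i≠j} ∑_{k,l} (−log p(A_{ij}|Θ_{kl})) T_{ik}T_{jl}`. -/
noncomputable def srGWp {N K : ℕ} (A : Matrix (Fin N) (Fin N) ℝ)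
    (Θ : Matrix (Fin K) (Fin K) ℝ) : ℝ :=
  ⨅ T : UK N K, ∑ i, ∑ j,
    if i = j then 0 else
      ∑ k, ∑ l, (-Real.log (pBer (A i j) (Θ k l))) * T.1 i k * T.1 j l

/- ----------------- auxiliary lemmas ----------------- -/

lemma pBer_pos {a θ : ℝ} (h : θ ∈ Set.Ioo (0:ℝ) 1) : 0 < pBer a θ :=
  mul_pos (Real.rpow_pos_of_pos h.1 _) (Real.rpow_pos_of_pos (by have := h.2; linarith) _)

lemma sum_prod_one {N K : ℕ} (S : Fin N → Fin K → ℝ) (hS : ∀ m, ∑ c, S m c = 1) :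
    ∑ z : Fin N → Fin K, ∏ m, S m (z m) = 1 := by
  have h := Finset.prod_univ_sum (fun _ : Fin N => (Finset.univ : Finset (Fin K)))
    (fun m c => S m c)
  rw [Fintype.piFinset_univ] at h
  rw [← h]
  simp [hS]

lemma sum_prod_marg {N K : ℕ} (S : Fin N → Fin K → ℝ) (hS : ∀ m, ∑ c, S m c = 1)
    (i j : Fin N) (hij : i ≠ j) (C : Fin K → Fin K → ℝ) :
    ∑ z : Fin N → Fin K, (∏ m, S m (z m)) * C (z i) (z j)
      = ∑ k, ∑ l, C k l * S i k * S j l := by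
  have hkl : ∀ k l : Fin K, S i k * S j l
      = ∑ z : Fin N → Fin K, (∏ m, S m (z m)) *
          ((if z i = k then (1:ℝ) else 0) * (if z j = l then (1:ℝ) else 0)) := by
    intro k l
    set h : Fin N → Fin K → ℝ := fun m c =>
      S m c * ((if m = i then (if c = k then (1:ℝ) else 0) else 1) *
               (if m = j then (if c = l then (1:ℝ) else 0) else 1)) with hh
    have h1 : ∏ m, ∑ c, h m c = ∑ z : Fin N → Fin K, ∏ m, h m (z m) := by
      have := Finset.prod_univ_sum (fun _ : Fin N => (Finset.univ : Finset (Fin K))) h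
      rwa [Fintype.piFinset_univ] at this
    have hF : ∀ m, ∑ c, h m c = if m = i then S i k else if m = j then S j l else 1 := by
      intro m
      by_cases hmi : m = i
      · subst hmi
        simp [hh, hij, mul_ite, Finset.sum_ite_eq']
      · by_cases hmj : m = j
        · subst hmj
          simp [hh, hmi, mul_ite, Finset.sum_ite_eq']
        · simp [hh, hmi, hmj, hS m]
    have hprodF : (∏ m, ∑ c, h m c) = S i k * S j l := by
      rw [Finset.prod_congr rfl (fun m _ => hF m)]
      rw [← Finset.mul_prod_erase Finset.univ _ (Finset.mem_univ i)]
      rw [← Finset.mul_prod_erase _ _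
        (Finset.mem_erase.mpr ⟨Ne.symm hij, Finset.mem_univ j⟩)]
      rw [if_pos rfl, if_neg (Ne.symm hij), if_pos rfl]
      rw [Finset.prod_eq_one, mul_one]
      intro m hm
      simp only [Finset.mem_erase] at hm
      rw [if_neg hm.2.1, if_neg hm.1]
    have hprodh : ∀ z : Fin N → Fin K, (∏ m, h m (z m))
        = (∏ m, S m (z m)) *
            ((if z i = k then (1:ℝ) else 0) * (if z j = l then (1:ℝ) else 0)) := by
      intro z
      simp only [hh]
      rw [Finset.prod_mul_distrib, Finset.prod_mul_distrib]
      congr 1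
      congr 1
      · rw [Finset.prod_ite_eq' Finset.univ i (fun m => if z m = k then (1:ℝ) else 0)]
        simp
      · rw [Finset.prod_ite_eq' Finset.univ j (fun m => if z m = l then (1:ℝ) else 0)]
        simp
    rw [← hprodF, h1]
    exact Finset.sum_congr rfl fun z _ => hprodh z
  have hC : ∀ z : Fin N → Fin K, C (z i) (z j)
      = ∑ k, ∑ l, C k l *
          ((if z i = k then (1:ℝ) else 0) * (if z j = l then (1:ℝ) else 0)) := by
    intro z
    simp [mul_ite, Finset.sum_ite_eq]
  symm
  calc ∑ k, ∑ l, C k l * S i k * S j l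
      = ∑ k, ∑ l, ∑ z : Fin N → Fin K, (∏ m, S m (z m)) *
          (C k l * ((if z i = k then (1:ℝ) else 0) * (if z j = l then (1:ℝ) else 0))) := by
        refine Finset.sum_congr rfl fun k _ => Finset.sum_congr rfl fun l _ => ?_
        rw [mul_assoc, hkl k l, Finset.mul_sum]
        exact Finset.sum_congr rfl fun z _ => by ring
    _ = ∑ z : Fin N → Fin K, ∑ k, ∑ l, (∏ m, S m (z m)) *
          (C k l * ((if z i = k then (1:ℝ) else 0) * (if z j = l then (1:ℝ) else 0))) := by
        exact (Finset.sum_congr rfl fun k _ => Finset.sum_comm).trans Finset.sum_comm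
    _ = ∑ z : Fin N → Fin K, (∏ m, S m (z m)) * C (z i) (z j) := by
        refine Finset.sum_congr rfl fun z _ => ?_
        simp only [← Finset.mul_sum]
        rw [← hC z]

/-- The exponent function `g z = ∑_{i≠j} log p(A_{ij}|Θ_{z_i z_j})`. -/
noncomputable def gfun {N K : ℕ} (A : Matrix (Fin N) (Fin N) ℝ)
    (Θ : Matrix (Fin K) (Fin K) ℝ) (z : Fin N → Fin K) : ℝ :=
  ∑ i, ∑ j, if i = j then 0 else Real.log (pBer (A i j) (Θ (z i) (z j)))

/-- `sup_Θ | (1/N²) sup_{α ∈ Δ_K} log p(A|Θ,α) + srGW_p(A,Θ) | ≤ (log K)/N`. -/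
theorem stmt5 (N K : ℕ) (hN : 0 < N) (hK : 1 ≤ K)
    (A : Matrix (Fin N) (Fin N) ℝ)
    (hAsymm : ∀ i j, A i j = A j i)
    (hAdiag : ∀ i, A i i = 0)
    (hA01 : ∀ i j, A i j = 0 ∨ A i j = 1) :
    ∀ Θ : Matrix (Fin K) (Fin K) ℝ, (∀ k l, Θ k l ∈ Set.Ioo (0 : ℝ) 1) →
      |(1 / (N : ℝ) ^ 2) *
          (⨆ α : {α : Fin K → ℝ // (∀ k, 0 ≤ α k) ∧ ∑ k, α k = 1},
            Real.log (SBMlik A Θ α.1)) +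
        srGWp A Θ| ≤ Real.log K / N := by
  intro Θ hΘ
  haveI : Nonempty (Fin K) := ⟨⟨0, hK⟩⟩
  have hNpos : (0:ℝ) < N := Nat.cast_pos.mpr hN
  have hKpos : (0:ℝ) < K := by exact_mod_cast Nat.lt_of_lt_of_le Nat.zero_lt_one hK
  have hK1 : (1:ℝ) ≤ K := by exact_mod_cast hK
  have hppos : ∀ i j k l, 0 < pBer (A i j) (Θ k l) := fun i j k l => pBer_pos (hΘ k l)
  -- the maximizing assignment
  obtain ⟨z0, hz0⟩ := Finite.exists_max (gfun A Θ)
  -- rewrite the SBM likelihood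
  have hexp : ∀ z : Fin N → Fin K,
      (∏ i, ∏ j, if i = j then (1:ℝ) else pBer (A i j) (Θ (z i) (z j)))
        = Real.exp (gfun A Θ z) := by
    intro z
    rw [gfun, Real.exp_sum]
    refine Finset.prod_congr rfl fun i _ => ?_
    rw [Real.exp_sum]
    refine Finset.prod_congr rfl fun j _ => ?_
    split_ifs with h
    · exact (Real.exp_zero).symm
    · exact (Real.exp_log (hppos i j _ _)).symm
  have hSBM : ∀ α : Fin K → ℝ, SBMlik A Θ α
      = ∑ z : Fin N → Fin K, Real.exp (gfun A Θ z) * ∏ i, α (z i) := by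
    intro α
    exact Finset.sum_congr rfl fun z _ => by rw [hexp z]
  -- the sup over α
  set Λ := {α : Fin K → ℝ // (∀ k, 0 ≤ α k) ∧ ∑ k, α k = 1} with hΛ
  have hαu_mem : (∀ k, 0 ≤ (fun _ : Fin K => 1/(K:ℝ)) k) ∧
      ∑ k : Fin K, (fun _ : Fin K => 1/(K:ℝ)) k = 1 := by
    constructor
    · intro k; positivity
    · simp [Finset.sum_const, Finset.card_univ]
      field_simp
  set αu : Λ := ⟨fun _ => 1/(K:ℝ), hαu_mem⟩ with hαu
  haveI : Nonempty Λ := ⟨αu⟩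
  have hub : ∀ α : Λ, Real.log (SBMlik A Θ α.1) ≤ gfun A Θ z0 := by
    rintro ⟨α, hα0, hα1⟩
    have hsum1 : ∑ z : Fin N → Fin K, ∏ i, α (z i) = 1 :=
      sum_prod_one (fun _ c => α c) (fun _ => hα1)
    have hle : SBMlik A Θ α ≤ Real.exp (gfun A Θ z0) := by
      rw [hSBM]
      calc ∑ z : Fin N → Fin K, Real.exp (gfun A Θ z) * ∏ i, α (z i)
          ≤ ∑ z : Fin N → Fin K, Real.exp (gfun A Θ z0) * ∏ i, α (z i) :=
            Finset.sum_le_sum fun z _ => mul_le_mul_of_nonneg_right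
              (Real.exp_le_exp.mpr (hz0 z)) (Finset.prod_nonneg fun i _ => hα0 _)
        _ = Real.exp (gfun A Θ z0) := by rw [← Finset.mul_sum, hsum1, mul_one]
    have hpos : 0 < SBMlik A Θ α := by
      obtain ⟨k0, _, hk0⟩ : ∃ k ∈ Finset.univ, (0:ℝ) < α k := by
        apply Finset.exists_lt_of_sum_lt (f := fun _ => (0:ℝ))
        simp [hα1]
      rw [hSBM]
      refine lt_of_lt_of_le ?_ (Finset.single_le_sum
        (fun z _ => mul_nonneg (Real.exp_pos _).le (Finset.prod_nonneg fun i _ => hα0 _))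
        (Finset.mem_univ (fun _ : Fin N => k0)))
      exact mul_pos (Real.exp_pos _) (Finset.prod_pos fun i _ => hk0)
    calc Real.log (SBMlik A Θ α) ≤ Real.log (Real.exp (gfun A Θ z0)) :=
          Real.log_le_log hpos hle
      _ = gfun A Θ z0 := Real.log_exp _
  have hlb : gfun A Θ z0 - N * Real.log K ≤ Real.log (SBMlik A Θ αu.1) := by
    have hterm : Real.exp (gfun A Θ z0) * (1/(K:ℝ))^N ≤ SBMlik A Θ αu.1 := by
      rw [hSBM]
      have : (∏ _i : Fin N, (1/(K:ℝ))) = (1/(K:ℝ))^N := by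
        simp [Finset.prod_const, Finset.card_univ]
      calc Real.exp (gfun A Θ z0) * (1/(K:ℝ))^N
          = Real.exp (gfun A Θ z0) * ∏ _i : Fin N, (1/(K:ℝ)) := by rw [this]
        _ ≤ ∑ z : Fin N → Fin K, Real.exp (gfun A Θ z) * ∏ i, (1/(K:ℝ)) :=
            Finset.single_le_sum (f := fun z : Fin N → Fin K =>
              Real.exp (gfun A Θ z) * ∏ _i : Fin N, (1/(K:ℝ)))
              (fun z _ => by positivity) (Finset.mem_univ z0)
        _ = _ := rfl
    have hpos : (0:ℝ) < Real.exp (gfun A Θ z0) * (1/(K:ℝ))^N := by positivity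
    have := Real.log_le_log hpos hterm
    rw [Real.log_mul (ne_of_gt (Real.exp_pos _)) (by positivity),
      Real.log_exp, one_div, ← Real.rpow_natCast (K:ℝ)⁻¹, Real.log_rpow (by positivity),
      Real.log_inv] at this
    linarith
  set L := ⨆ α : Λ, Real.log (SBMlik A Θ α.1) with hL
  have hBddA : BddAbove (Set.range fun α : Λ => Real.log (SBMlik A Θ α.1)) := by
    refine ⟨gfun A Θ z0, ?_⟩
    rintro x ⟨α, rfl⟩
    exact hub α
  have hLub : L ≤ gfun A Θ z0 := ciSup_le hub
  have hLlb : gfun A Θ z0 - N * Real.log K ≤ L :=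
    le_trans hlb (le_ciSup hBddA αu)
  -- the srGW part
  set w : Matrix (Fin N) (Fin K) ℝ → (Fin N → Fin K) → ℝ :=
    fun T z => ∏ m, (N:ℝ) * T m (z m) with hw
  have hmain : ∀ T : Matrix (Fin N) (Fin K) ℝ, T ∈ UK N K →
      (∑ i, ∑ j, if i = j then (0:ℝ) else
        ∑ k, ∑ l, (-Real.log (pBer (A i j) (Θ k l))) * T i k * T j l)
      = (1/(N:ℝ)^2) * ∑ z : Fin N → Fin K, w T z * (-(gfun A Θ z)) := by
    intro T hT
    have hS1 : ∀ m, ∑ c, (N:ℝ) * T m c = 1 := by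
      intro m
      rw [← Finset.mul_sum, hT.2 m]
      field_simp
    have hijkey : ∀ i j : Fin N, i ≠ j →
        (∑ k, ∑ l, (-Real.log (pBer (A i j) (Θ k l))) * T i k * T j l)
          = (1/(N:ℝ)^2) * ∑ z : Fin N → Fin K, w T z *
              (-Real.log (pBer (A i j) (Θ (z i) (z j)))) := by
      intro i j hij
      have := sum_prod_marg (fun m c => (N:ℝ) * T m c) hS1 i j hij
        (fun k l => -Real.log (pBer (A i j) (Θ k l)))
      have h2 : ∑ z : Fin N → Fin K, w T z * (-Real.log (pBer (A i j) (Θ (z i) (z j))))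
          = ∑ k, ∑ l, (-Real.log (pBer (A i j) (Θ k l))) * ((N:ℝ) * T i k) * ((N:ℝ) * T j l) := by
        rw [← this]
      rw [h2, Finset.mul_sum]
      refine Finset.sum_congr rfl fun k _ => ?_
      rw [Finset.mul_sum]
      refine Finset.sum_congr rfl fun l _ => ?_
      field_simp
    have hGneg : ∀ z : Fin N → Fin K, w T z * (-(gfun A Θ z))
        = ∑ i, ∑ j, w T z *
            (if i = j then (0:ℝ) else -Real.log (pBer (A i j) (Θ (z i) (z j)))) := by
      intro z
      have hneg : -(gfun A Θ z) = ∑ i, ∑ j,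
          (if i = j then (0:ℝ) else -Real.log (pBer (A i j) (Θ (z i) (z j)))) := by
        rw [gfun, ← Finset.sum_neg_distrib]
        refine Finset.sum_congr rfl fun i _ => ?_
        rw [← Finset.sum_neg_distrib]
        refine Finset.sum_congr rfl fun j _ => ?_
        split_ifs <;> simp
      rw [hneg, Finset.mul_sum]
      exact Finset.sum_congr rfl fun i _ => by rw [Finset.mul_sum]
    calc (∑ i, ∑ j, if i = j then (0:ℝ) else
          ∑ k, ∑ l, (-Real.log (pBer (A i j) (Θ k l))) * T i k * T j l)
        = ∑ i, ∑ j, (1/(N:ℝ)^2) * ∑ z : Fin N → Fin K, w T z *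
            (if i = j then (0:ℝ) else -Real.log (pBer (A i j) (Θ (z i) (z j)))) := by
          refine Finset.sum_congr rfl fun i _ => Finset.sum_congr rfl fun j _ => ?_
          split_ifs with h
          · simp
          · rw [hijkey i j h]
      _ = (1/(N:ℝ)^2) * ∑ i, ∑ j, ∑ z : Fin N → Fin K, w T z *
            (if i = j then (0:ℝ) else -Real.log (pBer (A i j) (Θ (z i) (z j)))) := by
          rw [Finset.mul_sum]
          exact Finset.sum_congr rfl fun i _ => (Finset.mul_sum _ _ _).symm
      _ = (1/(N:ℝ)^2) * ∑ z : Fin N → Fin K, ∑ i, ∑ j, w T z *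
            (if i = j then (0:ℝ) else -Real.log (pBer (A i j) (Θ (z i) (z j)))) := by
          congr 1
          exact (Finset.sum_congr rfl fun i _ => Finset.sum_comm).trans Finset.sum_comm
      _ = (1/(N:ℝ)^2) * ∑ z : Fin N → Fin K, w T z * (-(gfun A Θ z)) := by
          congr 1
          exact Finset.sum_congr rfl fun z _ => (hGneg z).symm
  have hwnonneg : ∀ (T : Matrix (Fin N) (Fin K) ℝ), T ∈ UK N K → ∀ z, 0 ≤ w T z :=
    fun T hT z => Finset.prod_nonneg fun m _ => mul_nonneg hNpos.le (hT.1 m (z m))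
  have hwsum : ∀ (T : Matrix (Fin N) (Fin K) ℝ), T ∈ UK N K → ∑ z : Fin N → Fin K, w T z = 1 := by
    intro T hT
    simp only [hw]
    refine sum_prod_one (fun m c => (N:ℝ) * T m c) fun m => ?_
    rw [← Finset.mul_sum, hT.2 m]
    field_simp
  have hlower : ∀ T : Matrix (Fin N) (Fin K) ℝ, T ∈ UK N K →
      (1/(N:ℝ)^2) * (-(gfun A Θ z0)) ≤
        (1/(N:ℝ)^2) * ∑ z : Fin N → Fin K, w T z * (-(gfun A Θ z)) := by
    intro T hT
    apply mul_le_mul_of_nonneg_left _ (by positivity)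
    calc -(gfun A Θ z0) = ∑ z : Fin N → Fin K, w T z * (-(gfun A Θ z0)) := by
          rw [← Finset.sum_mul, hwsum T hT, one_mul]
      _ ≤ ∑ z : Fin N → Fin K, w T z * (-(gfun A Θ z)) :=
          Finset.sum_le_sum fun z _ => mul_le_mul_of_nonneg_left
            (neg_le_neg (hz0 z)) (hwnonneg T hT z)
  -- the minimizing transport plan
  set Tz : (Fin N → Fin K) → Matrix (Fin N) (Fin K) ℝ :=
    fun z => Matrix.of fun i k => if z i = k then (1/(N:ℝ)) else 0 with hTz
  have hTzmem : ∀ z, Tz z ∈ UK N K := by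
    intro z
    constructor
    · intro i k
      simp only [hTz, Matrix.of_apply]
      split_ifs
      · positivity
      · exact le_rfl
    · intro i
      simp [hTz, Finset.sum_ite_eq]
  have hwz : ∀ z z' : Fin N → Fin K, w (Tz z) z' = if z' = z then 1 else 0 := by
    intro z z'
    split_ifs with h
    · subst h
      apply Finset.prod_eq_one
      intro m _
      simp only [hTz, Matrix.of_apply, if_pos rfl]
      rw [if_pos trivial, mul_one_div_cancel hNpos.ne']
    · obtain ⟨m, hm⟩ : ∃ m, z' m ≠ z m := by
        by_contra hc
        push_neg at hc
        exact h (funext hc)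
      refine Finset.prod_eq_zero (Finset.mem_univ m) ?_
      simp [hTz, Ne.symm hm]
  have hvalTz : ∀ z : Fin N → Fin K,
      (1/(N:ℝ)^2) * ∑ z' : Fin N → Fin K, w (Tz z) z' * (-(gfun A Θ z'))
        = (1/(N:ℝ)^2) * (-(gfun A Θ z)) := by
    intro z
    congr 1
    rw [Finset.sum_congr rfl fun z' _ => by rw [hwz z z']]
    simp [ite_mul, Finset.sum_ite_eq']
  haveI : Nonempty ↑(UK N K) := ⟨⟨Tz z0, hTzmem z0⟩⟩
  have hsr : srGWp A Θ = (1/(N:ℝ)^2) * (-(gfun A Θ z0)) := by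
    have hBddB : BddBelow (Set.range fun T : UK N K => ∑ i, ∑ j,
        if i = j then (0:ℝ) else
          ∑ k, ∑ l, (-Real.log (pBer (A i j) (Θ k l))) * T.1 i k * T.1 j l) := by
      refine ⟨(1/(N:ℝ)^2) * (-(gfun A Θ z0)), ?_⟩
      rintro x ⟨T, rfl⟩
      dsimp only
      rw [hmain T.1 T.2]
      exact hlower T.1 T.2
    apply le_antisymm
    · refine le_trans (ciInf_le hBddB ⟨Tz z0, hTzmem z0⟩) ?_
      rw [hmain (Tz z0) (hTzmem z0), hvalTz z0]
    · apply le_ciInf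
      intro T
      rw [hmain T.1 T.2]
      exact hlower T.1 T.2
  -- final combination
  rw [hsr]
  have hNlogK : 0 ≤ (N:ℝ) * Real.log K := mul_nonneg hNpos.le (Real.log_nonneg hK1)
  have habs : |L - gfun A Θ z0| ≤ (N:ℝ) * Real.log K := by
    rw [abs_le]
    constructor
    · linarith
    · linarith
  calc |1/(N:ℝ)^2 * L + (1/(N:ℝ)^2) * (-(gfun A Θ z0))|
      = (1/(N:ℝ)^2) * |L - gfun A Θ z0| := by
        rw [show 1/(N:ℝ)^2 * L + (1/(N:ℝ)^2) * (-(gfun A Θ z0))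
            = (1/(N:ℝ)^2) * (L - gfun A Θ z0) by ring]
        rw [abs_mul, abs_of_pos (by positivity)]
    _ ≤ (1/(N:ℝ)^2) * ((N:ℝ) * Real.log K) :=
        mul_le_mul_of_nonneg_left habs (by positivity)
    _ = Real.log K / N := by
        field_simp
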